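/- If f : [0,∞)² → ℝ has the representation f(u,v) = ∫_{[0,∞)²} e^{−tu−sv} dρ(t,s) for a finite nonnegative measure ρ on [0,∞)², and d₁, d₂ are kernels of negative type on sets X and Y respectively with d₁(x,x) = d₂(y,y) = 0, then ((x,z),(y,w)) ↦ f(d₁(x,y), d₂(z,w)) is a positive definite kernel on X × Y. -/

import Mathlib

open Set MeasureTheory

/-- A kernel `K : X → X → ℝ` is positive definite if every finite real quadratic
form built from it is nonnegative. -/
def IsPosDefKernel {X : Type*} (K : X → X → ℝ) : Prop :=
  ∀ (n : ℕ) (x : Fin n → X) (c : Fin n → ℝ),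
    0 ≤ ∑ μ, ∑ ν, c μ * c ν * K (x μ) (x ν)

/-- A symmetric kernel vanishing on the diagonal is of negative type if all quadratic
forms with coefficients summing to zero are nonpositive. -/
def IsNegTypeKernel {X : Type*} (d : X → X → ℝ) : Prop :=
  (∀ x y, d x y = d y x) ∧ (∀ x, d x x = 0) ∧
    ∀ (n : ℕ) (x : Fin n → X) (c : Fin n → ℝ), (∑ μ, c μ) = 0 →
      ∑ μ, ∑ ν, c μ * c ν * d (x μ) (x ν) ≤ 0

lemma IsNegTypeKernel.nonneg {X : Type*} {d : X → X → ℝ} (h : IsNegTypeKernel d) (a b : X) :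
    0 ≤ d a b := by
  have := h.2.2 2 ![a, b] ![1, -1] (by simp)
  simp only [Fin.sum_univ_two, Matrix.cons_val_zero, Matrix.cons_val_one, Matrix.head_cons,
    h.2.1] at this
  have hba := h.1 b a
  nlinarith [this]

lemma lemA {n k : ℕ} (B : Matrix (Fin n) (Fin n) ℝ) (c : Fin n → ℝ) :
    0 ≤ ∑ μ, ∑ ν, c μ * c ν * (∑ i, B i μ * B i ν) ^ k := by
  set P := Fintype.piFinset (fun _ : Fin k => (Finset.univ : Finset (Fin n))) with hP
  set A : Fin n → (Fin k → Fin n) → ℝ := fun μ p => c μ * ∏ i, B (p i) μ with hA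
  have key : ∀ μ ν : Fin n, c μ * c ν * (∑ i, B i μ * B i ν) ^ k
      = ∑ p ∈ P, A μ p * A ν p := by
    intro μ ν
    rw [Finset.sum_pow', Finset.mul_sum]
    refine Finset.sum_congr rfl fun p _ => ?_
    rw [Finset.prod_mul_distrib, hA]; ring
  simp_rw [key]
  calc (0:ℝ) ≤ ∑ p ∈ P, (∑ μ, A μ p)^2 := Finset.sum_nonneg fun p _ => sq_nonneg _
    _ = ∑ p ∈ P, ∑ μ, ∑ ν, A μ p * A ν p := by
        refine Finset.sum_congr rfl fun p _ => ?_
        rw [sq, Finset.sum_mul_sum]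
    _ = ∑ μ, ∑ p ∈ P, ∑ ν, A μ p * A ν p := Finset.sum_comm
    _ = ∑ μ, ∑ ν, ∑ p ∈ P, A μ p * A ν p :=
        Finset.sum_congr rfl fun μ _ => Finset.sum_comm

lemma lemB {n : ℕ} {M : Matrix (Fin n) (Fin n) ℝ} (hM : M.PosSemidef) (c : Fin n → ℝ) :
    0 ≤ ∑ μ, ∑ ν, c μ * c ν * Real.exp (M μ ν) := by
  open scoped MatrixOrder in
  obtain ⟨B, hB⟩ := CStarAlgebra.nonneg_iff_eq_star_mul_self.mp hM.nonneg
  have hMe : ∀ μ ν, M μ ν = ∑ i, B i μ * B i ν := by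
    intro μ ν; rw [hB]; simp [Matrix.mul_apply, Matrix.conjTranspose_apply]
  have hsum : ∀ μ ν : Fin n,
      Summable (fun k : ℕ => c μ * c ν * ((M μ ν) ^ k / (Nat.factorial k : ℝ))) :=
    fun μ ν => (Real.summable_pow_div_factorial (M μ ν)).mul_left _
  have hexp : ∀ μ ν : Fin n, c μ * c ν * Real.exp (M μ ν)
      = ∑' k : ℕ, c μ * c ν * ((M μ ν) ^ k / (Nat.factorial k : ℝ)) := by
    intro μ ν
    rw [Real.exp_eq_exp_ℝ, NormedSpace.exp_eq_tsum_div, tsum_mul_left]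
  simp_rw [hexp]
  have s1 : ∀ μ : Fin n, ∑ ν, ∑' k : ℕ, c μ * c ν * ((M μ ν) ^ k / (Nat.factorial k : ℝ))
      = ∑' k : ℕ, ∑ ν, c μ * c ν * ((M μ ν) ^ k / (Nat.factorial k : ℝ)) :=
    fun μ => (Summable.tsum_finsetSum fun ν _ => hsum μ ν).symm
  simp_rw [s1]
  rw [← Summable.tsum_finsetSum fun μ _ => summable_sum fun ν _ => hsum μ ν]
  refine tsum_nonneg fun k => ?_
  simp_rw [← mul_div_assoc, ← Finset.sum_div]
  refine div_nonneg ?_ (Nat.cast_nonneg _)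
  simp_rw [hMe]
  exact lemA B c

lemma gram_quad {X : Type*} {d : X → X → ℝ} (h : IsNegTypeKernel d) {m : ℕ}
    (x : Fin (m+1) → X) (c : Fin (m+1) → ℝ) :
    0 ≤ ∑ μ, ∑ ν, c μ * c ν * ((d (x μ) (x 0) + d (x ν) (x 0) - d (x μ) (x ν)) / 2) := by
  obtain ⟨hsym, hzero, hneg⟩ := h
  set s := ∑ μ, c μ with hs
  set A := ∑ μ, c μ * d (x μ) (x 0) with hA
  set Q := ∑ μ, ∑ ν, c μ * c ν * d (x μ) (x ν) with hQ
  have hgoal : ∑ μ, ∑ ν, c μ * c ν * ((d (x μ) (x 0) + d (x ν) (x 0) - d (x μ) (x ν)) / 2)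
      = s * A - Q / 2 := by
    have hrow : ∀ μ, ∑ ν, c μ * c ν * ((d (x μ) (x 0) + d (x ν) (x 0) - d (x μ) (x ν)) / 2)
        = (c μ * d (x μ) (x 0) / 2) * s + (c μ / 2) * A
          - (∑ ν, c μ * c ν * d (x μ) (x ν)) / 2 := by
      intro μ
      have e : ∀ ν, c μ * c ν * ((d (x μ) (x 0) + d (x ν) (x 0) - d (x μ) (x ν)) / 2)
          = (c μ * d (x μ) (x 0) / 2) * c ν + (c μ / 2) * (c ν * d (x ν) (x 0))
            - (c μ * c ν * d (x μ) (x ν)) / 2 := fun ν => by ring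
      simp_rw [e, Finset.sum_sub_distrib, Finset.sum_add_distrib, ← Finset.mul_sum,
        ← Finset.sum_div]
      rfl
    simp_rw [hrow, Finset.sum_sub_distrib, Finset.sum_add_distrib,
      ← Finset.sum_mul, ← Finset.sum_div]
    rw [← hA, ← hs, ← hQ]
    ring
  set a : Fin (m+1) → ℝ := fun ν => c ν - if ν = 0 then s else 0 with ha
  have hasum : ∑ ν, a ν = 0 := by
    simp [ha, Finset.sum_sub_distrib, Finset.sum_ite_eq', ← hs]
  have hneg' := hneg (m+1) x a hasum
  have hrow2 : ∀ μ, ∑ ν, a μ * a ν * d (x μ) (x ν)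
      = a μ * ((∑ ν, c ν * d (x μ) (x ν)) - s * d (x μ) (x 0)) := by
    intro μ
    have e : ∀ ν, a μ * a ν * d (x μ) (x ν)
        = a μ * (c ν * d (x μ) (x ν)) - (if ν = 0 then a μ * (s * d (x μ) (x ν)) else 0) := by
      intro ν; by_cases hν : ν = 0 <;> simp [ha, hν] <;> ring
    simp_rw [e, Finset.sum_sub_distrib, ← Finset.mul_sum,
      Finset.sum_ite_eq' Finset.univ (0 : Fin (m+1))]
    simp [mul_sub]
  have hexp : ∑ μ, ∑ ν, a μ * a ν * d (x μ) (x ν) = Q - 2 * s * A := by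
    simp_rw [hrow2]
    have e2 : ∀ μ, a μ * ((∑ ν, c ν * d (x μ) (x ν)) - s * d (x μ) (x 0))
        = c μ * (∑ ν, c ν * d (x μ) (x ν)) - s * (c μ * d (x μ) (x 0))
          - (if μ = 0 then s * ((∑ ν, c ν * d (x μ) (x ν)) - s * d (x μ) (x 0)) else 0) := by
      intro μ; by_cases hμ : μ = 0 <;> simp [ha, hμ] <;> ring
    simp_rw [e2, Finset.sum_sub_distrib, ← Finset.mul_sum,
      Finset.sum_ite_eq' Finset.univ (0 : Fin (m+1))]
    have h0 : (∑ ν, c ν * d (x 0) (x ν)) = A := by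
      rw [hA]; exact Finset.sum_congr rfl fun ν _ => by rw [hsym]
    have hQ' : ∑ μ, c μ * ∑ ν, c ν * d (x μ) (x ν) = Q := by
      rw [hQ]
      exact Finset.sum_congr rfl fun μ _ => by
        rw [Finset.mul_sum]; exact Finset.sum_congr rfl fun ν _ => by ring
    simp [h0, hQ', hzero, ← hA]
    ring
  rw [hgoal]
  rw [hexp] at hneg'
  linarith

lemma key_exp_nonneg {X Y : Type*} {d₁ : X → X → ℝ} {d₂ : Y → Y → ℝ} (h₁ : IsNegTypeKernel d₁)
    (h₂ : IsNegTypeKernel d₂) {t s : ℝ} (ht : 0 ≤ t) (hs : 0 ≤ s) (n : ℕ)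
    (x : Fin n → X × Y) (c : Fin n → ℝ) :
    0 ≤ ∑ μ, ∑ ν, c μ * c ν *
        Real.exp (-(t * d₁ (x μ).1 (x ν).1) - s * d₂ (x μ).2 (x ν).2) := by
  rcases n with _ | m
  · simp
  set K1 : Fin (m+1) → Fin (m+1) → ℝ := fun μ ν =>
    (d₁ (x μ).1 (x 0).1 + d₁ (x ν).1 (x 0).1 - d₁ (x μ).1 (x ν).1) / 2 with hK1
  set K2 : Fin (m+1) → Fin (m+1) → ℝ := fun μ ν =>
    (d₂ (x μ).2 (x 0).2 + d₂ (x ν).2 (x 0).2 - d₂ (x μ).2 (x ν).2) / 2 with hK2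
  set M : Matrix (Fin (m+1)) (Fin (m+1)) ℝ :=
    Matrix.of fun μ ν => 2 * t * K1 μ ν + 2 * s * K2 μ ν with hM
  have qform : ∀ v : Fin (m+1) → ℝ, 0 ≤ ∑ μ, ∑ ν, v μ * v ν * M μ ν := by
    intro v
    have e : ∀ μ ν, v μ * v ν * M μ ν
        = 2 * t * (v μ * v ν * K1 μ ν) + 2 * s * (v μ * v ν * K2 μ ν) := by
      intro μ ν; simp only [hM, Matrix.of_apply]; ring
    simp_rw [e, Finset.sum_add_distrib, ← Finset.mul_sum]
    have g1 := gram_quad h₁ (fun μ => (x μ).1) v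
    have g2 := gram_quad h₂ (fun μ => (x μ).2) v
    have e1 : (0:ℝ) ≤ ∑ μ, ∑ ν, v μ * v ν * K1 μ ν := g1
    have e2 : (0:ℝ) ≤ ∑ μ, ∑ ν, v μ * v ν * K2 μ ν := g2
    positivity
  have hMpsd : M.PosSemidef := by
    rw [Matrix.posSemidef_iff_dotProduct_mulVec]
    constructor
    · ext μ ν
      simp only [Matrix.conjTranspose_apply, hM, Matrix.of_apply, star_trivial, hK1, hK2]
      rw [h₁.1 (x ν).1 (x μ).1, h₂.1 (x ν).2 (x μ).2]
      ring
    · intro v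
      have hdv : dotProduct (star v) (M.mulVec v) = ∑ μ, ∑ ν, v μ * v ν * M μ ν := by
        simp only [dotProduct, Matrix.mulVec, Pi.star_apply, star_trivial,
          Finset.mul_sum]
        exact Finset.sum_congr rfl fun μ _ => Finset.sum_congr rfl fun ν _ => by ring
      rw [hdv]; exact qform v
  set g : Fin (m+1) → ℝ := fun μ => Real.exp (-(t * K1 μ μ) - s * K2 μ μ) with hg
  have hd1 : ∀ μ ν, d₁ (x μ).1 (x ν).1 = K1 μ μ + K1 ν ν - 2 * K1 μ ν := by
    intro μ ν; simp only [hK1, h₁.2.1]; ring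
  have hd2 : ∀ μ ν, d₂ (x μ).2 (x ν).2 = K2 μ μ + K2 ν ν - 2 * K2 μ ν := by
    intro μ ν; simp only [hK2, h₂.2.1]; ring
  have hE : ∀ μ ν, c μ * c ν *
      Real.exp (-(t * d₁ (x μ).1 (x ν).1) - s * d₂ (x μ).2 (x ν).2)
      = (c μ * g μ) * (c ν * g ν) * Real.exp (M μ ν) := by
    intro μ ν
    have harg : -(t * d₁ (x μ).1 (x ν).1) - s * d₂ (x μ).2 (x ν).2
        = (-(t * K1 μ μ) - s * K2 μ μ) + ((-(t * K1 ν ν) - s * K2 ν ν) + M μ ν) := by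
      rw [hd1, hd2]; simp only [hM, Matrix.of_apply]; ring
    rw [harg, Real.exp_add, Real.exp_add, hg]
    ring
  simp_rw [hE]
  exact lemB hMpsd (fun μ => c μ * g μ)

/-- If `f(u,v) = ∫ e^{-tu-sv} dρ(t,s)` for a finite nonnegative measure `ρ` on
`[0,∞)²`, and `d₁, d₂` are kernels of negative type, then
`((x,z),(y,w)) ↦ f(d₁(x,y), d₂(z,w))` is positive definite on `X × Y`. -/
theorem laplace_transform_of_neg_type_pos_def {X Y : Type*}
    (f : ℝ → ℝ → ℝ) (ρ : Measure (ℝ × ℝ)) [IsFiniteMeasure ρ]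
    (hρ : ρ ((Ici (0 : ℝ) ×ˢ Ici (0 : ℝ))ᶜ) = 0)
    (hf : ∀ u v : ℝ, f u v =
      ∫ p in Ici (0 : ℝ) ×ˢ Ici (0 : ℝ), Real.exp (-(p.1 * u) - p.2 * v) ∂ρ)
    (d₁ : X → X → ℝ) (d₂ : Y → Y → ℝ)
    (h₁ : IsNegTypeKernel d₁) (h₂ : IsNegTypeKernel d₂) :
    IsPosDefKernel (fun p q : X × Y => f (d₁ p.1 q.1) (d₂ p.2 q.2)) := by
  intro n x c
  set S : Set (ℝ × ℝ) := Ici (0 : ℝ) ×ˢ Ici (0 : ℝ) with hS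
  have hSm : MeasurableSet S := measurableSet_Ici.prod measurableSet_Ici
  simp only [hf]
  have hint : ∀ μ ν : Fin n, Integrable
      (fun p : ℝ × ℝ => Real.exp (-(p.1 * d₁ (x μ).1 (x ν).1) - p.2 * d₂ (x μ).2 (x ν).2))
      (ρ.restrict S) := by
    intro μ ν
    refine Integrable.mono' (integrable_const 1) ?_ ?_
    · exact Continuous.aestronglyMeasurable (by fun_prop)
    · refine (ae_restrict_iff' hSm).2 (Filter.Eventually.of_forall fun p hp => ?_)
      rw [Real.norm_eq_abs, abs_of_pos (Real.exp_pos _), Real.exp_le_one_iff]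
      have h1 : (0:ℝ) ≤ p.1 := hp.1
      have h2 : (0:ℝ) ≤ p.2 := hp.2
      have h3 := h₁.nonneg (x μ).1 (x ν).1
      have h4 := h₂.nonneg (x μ).2 (x ν).2
      nlinarith
  have swap : ∫ p in S, (∑ μ, ∑ ν, c μ * c ν *
        Real.exp (-(p.1 * d₁ (x μ).1 (x ν).1) - p.2 * d₂ (x μ).2 (x ν).2)) ∂ρ
      = ∑ μ, ∑ ν, c μ * c ν * ∫ p in S,
          Real.exp (-(p.1 * d₁ (x μ).1 (x ν).1) - p.2 * d₂ (x μ).2 (x ν).2) ∂ρ := by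
    rw [integral_finset_sum _
      (fun μ _ => integrable_finset_sum _ fun ν _ => ((hint μ ν).const_mul _))]
    refine Finset.sum_congr rfl fun μ _ => ?_
    rw [integral_finset_sum _ (fun ν _ => (hint μ ν).const_mul _)]
    exact Finset.sum_congr rfl fun ν _ => integral_const_mul _ _
  rw [← swap]
  refine setIntegral_nonneg hSm fun p hp => ?_
  exact key_exp_nonneg h₁ h₂ hp.1 hp.2 n x c
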